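/- Let A be a real symmetric n×n matrix with smallest eigenvalue λ₁ < 0 and b ∈ ℝⁿ. Let S₀ be the set of minimizers of f(x) = xᵀAx − 2bᵀx over the unit ball B and S₁ the set of minimizers of f̃(x) = xᵀ(A − λ₁I)x − 2bᵀx + λ₁ over B. Then S₀ = S₁ ∩ {x : ‖x‖ = 1}. -/

import Mathlib

open Matrix
lemma euclid_dot_self {n : ℕ} (x : EuclideanSpace ℝ (Fin n)) :
    dotProduct (x : Fin n → ℝ) x = ‖x‖^2 := by
  rw [← real_inner_self_eq_norm_sq]
  simp only [dotProduct, PiLp.inner_apply, RCLike.inner_apply, conj_trivial]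

lemma key_step {n : ℕ} (A : Matrix (Fin n) (Fin n) ℝ) (b v : Fin n → ℝ) (lam1 : ℝ)
    (hA : A.IsSymm) (hv : v ≠ 0) (hAv : A *ᵥ v = lam1 • v)
    (y : Fin n → ℝ) (hy : y ⬝ᵥ y ≤ 1) :
    ∃ z : Fin n → ℝ, z ⬝ᵥ z = 1 ∧
      z ⬝ᵥ (A *ᵥ z) - 2 * (b ⬝ᵥ z)
        ≤ y ⬝ᵥ (A *ᵥ y) - lam1 * (y ⬝ᵥ y) - 2 * (b ⬝ᵥ y) + lam1 := by
  have ha0 : (0:ℝ) ≤ v ⬝ᵥ v := Finset.sum_nonneg fun i _ => mul_self_nonneg _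
  have ha : (0:ℝ) < v ⬝ᵥ v :=
    lt_of_le_of_ne ha0 (Ne.symm fun h => hv (dotProduct_self_eq_zero.mp h))
  set a : ℝ := v ⬝ᵥ v with ha_def
  set β : ℝ := 2 * (y ⬝ᵥ v) with hβ_def
  set c : ℝ := y ⬝ᵥ y - 1 with hc_def
  have hc : c ≤ 0 := by simp [hc_def]; linarith
  have hD : (0:ℝ) ≤ β^2 - 4*a*c := by nlinarith
  set s : ℝ := Real.sqrt (β^2 - 4*a*c) with hs_def
  have hs0 : 0 ≤ s := Real.sqrt_nonneg _
  have hs2 : s^2 = β^2 - 4*a*c := Real.sq_sqrt hD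
  have hsβ : |β| ≤ s := by
    nlinarith [abs_nonneg β, sq_abs β]
  set t : ℝ := (if 0 ≤ b ⬝ᵥ v then (-β + s) else (-β - s)) / (2*a) with ht_def
  have h_root : a*t^2 + β*t + c = 0 := by
    rw [ht_def]
    split_ifs <;> field_simp <;> nlinarith [hs2]
  have h_sign : 0 ≤ t * (b ⬝ᵥ v) := by
    rw [ht_def]
    split_ifs with h
    · apply mul_nonneg _ h
      apply div_nonneg _ (by linarith)
      have := le_abs_self β; linarith
    · rw [← neg_mul_neg]
      apply mul_nonneg _ (by linarith)
      have hrw : -((-β - s) / (2 * a)) = (β + s) / (2 * a) := by ring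
      rw [hrw]
      apply div_nonneg _ (by linarith)
      have := neg_abs_le β; linarith
  refine ⟨y + t • v, ?_, ?_⟩
  · have : (y + t • v) ⬝ᵥ (y + t • v) = y ⬝ᵥ y + 2*t*(y ⬝ᵥ v) + t^2 * (v ⬝ᵥ v) := by
      simp [add_dotProduct, dotProduct_add, smul_dotProduct,
        dotProduct_smul, dotProduct_comm v y, smul_eq_mul]
      ring
    rw [this]; simp only [hc_def, hβ_def, ha_def] at h_root ⊢; linarith [h_root]
  · have hsym : v ⬝ᵥ (A *ᵥ y) = lam1 * (v ⬝ᵥ y) := by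
      rw [Matrix.dotProduct_mulVec, ← Matrix.mulVec_transpose, hA.eq, hAv,
        smul_dotProduct, smul_eq_mul]
    have hsym2 : y ⬝ᵥ (A *ᵥ v) = lam1 * (y ⬝ᵥ v) := by
      rw [hAv, dotProduct_smul, smul_eq_mul]
    have hvAv : v ⬝ᵥ (A *ᵥ v) = lam1 * a := by
      rw [hAv, dotProduct_smul, smul_eq_mul, ha_def]
    have hexp : (y + t • v) ⬝ᵥ (A *ᵥ (y + t • v)) =
        y ⬝ᵥ (A *ᵥ y) + lam1 * (β*t + a*t^2) := by
      rw [Matrix.mulVec_add, Matrix.mulVec_smul]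
      simp only [add_dotProduct, dotProduct_add, smul_dotProduct,
        dotProduct_smul, smul_eq_mul, hsym, hsym2, hvAv]
      rw [dotProduct_comm v y]
      simp only [hβ_def]; ring
    have hb : b ⬝ᵥ (y + t • v) = b ⬝ᵥ y + t * (b ⬝ᵥ v) := by
      simp [dotProduct_add, dotProduct_smul, smul_eq_mul]
    rw [hexp, hb]
    have hβa : β*t + a*t^2 = -c := by linarith
    rw [hβa]
    simp only [hc_def]
    nlinarith [mul_nonneg (le_of_lt (by linarith : (0:ℝ) < 1)) h_sign]

lemma quad_rewrite {n : ℕ} (A : Matrix (Fin n) (Fin n) ℝ) (lam1 : ℝ) (x : Fin n → ℝ) :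
    x ⬝ᵥ ((A - lam1 • (1 : Matrix (Fin n) (Fin n) ℝ)) *ᵥ x)
      = x ⬝ᵥ (A *ᵥ x) - lam1 * (x ⬝ᵥ x) := by
  rw [Matrix.sub_mulVec, dotProduct_sub, Matrix.smul_mulVec,
    Matrix.one_mulVec, dotProduct_smul, smul_eq_mul]

/-- With `λ₁ < 0` the smallest eigenvalue of symmetric `A`, the solution set
`S₀` of the TRS equals the intersection of the solution set `S₁` of its convex relaxation
with the unit sphere. -/
theorem trs_solution_set_relation
    (n : ℕ) (A : Matrix (Fin n) (Fin n) ℝ) (b : Fin n → ℝ) (lam1 : ℝ)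
    (hA : A.IsSymm)
    (hEig : ∃ v : Fin n → ℝ, v ≠ 0 ∧ A *ᵥ v = lam1 • v)
    (hLow : ∀ x : Fin n → ℝ, lam1 * (x ⬝ᵥ x) ≤ x ⬝ᵥ (A *ᵥ x))
    (hlam : lam1 < 0) :
    {x : EuclideanSpace ℝ (Fin n) | ‖x‖ ≤ 1 ∧
        ∀ y : EuclideanSpace ℝ (Fin n), ‖y‖ ≤ 1 →
          x ⬝ᵥ (A *ᵥ x) - 2 * (b ⬝ᵥ x) ≤ y ⬝ᵥ (A *ᵥ y) - 2 * (b ⬝ᵥ y)}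
      = {x : EuclideanSpace ℝ (Fin n) | ‖x‖ ≤ 1 ∧
          ∀ y : EuclideanSpace ℝ (Fin n), ‖y‖ ≤ 1 →
            x ⬝ᵥ ((A - lam1 • (1 : Matrix (Fin n) (Fin n) ℝ)) *ᵥ x) - 2 * (b ⬝ᵥ x) + lam1
              ≤ y ⬝ᵥ ((A - lam1 • (1 : Matrix (Fin n) (Fin n) ℝ)) *ᵥ y) - 2 * (b ⬝ᵥ y) + lam1}
        ∩ {x : EuclideanSpace ℝ (Fin n) | ‖x‖ = 1} := by
  obtain ⟨v, hv, hAv⟩ := hEig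
  have hnormsq : ∀ x : EuclideanSpace ℝ (Fin n),
      dotProduct (x : Fin n → ℝ) x = ‖x‖^2 := euclid_dot_self
  have hcast : ∀ z : Fin n → ℝ,
      (((WithLp.equiv 2 (Fin n → ℝ)).symm z : EuclideanSpace ℝ (Fin n)) : Fin n → ℝ) = z :=
    fun _ => rfl
  have hle : ∀ x : EuclideanSpace ℝ (Fin n), ‖x‖ ≤ 1 →
      dotProduct (x : Fin n → ℝ) x ≤ 1 := by
    intro x hx
    rw [hnormsq]
    nlinarith [norm_nonneg x]
  have hnorm1 : ∀ z : Fin n → ℝ, z ⬝ᵥ z = 1 →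
      ‖((WithLp.equiv 2 (Fin n → ℝ)).symm z : EuclideanSpace ℝ (Fin n))‖ = 1 := by
    intro z hz
    have h : z ⬝ᵥ z
        = ‖((WithLp.equiv 2 (Fin n → ℝ)).symm z : EuclideanSpace ℝ (Fin n))‖^2 :=
      hnormsq ((WithLp.equiv 2 (Fin n → ℝ)).symm z)
    rw [hz] at h
    nlinarith [norm_nonneg ((WithLp.equiv 2 (Fin n → ℝ)).symm z : EuclideanSpace ℝ (Fin n))]
  ext x
  simp only [Set.mem_setOf_eq, Set.mem_inter_iff, quad_rewrite]
  constructor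
  · rintro ⟨hx1, hx2⟩
    obtain ⟨z, hz1, hz2⟩ := key_step A b v lam1 hA hv hAv x (hle x hx1)
    have hznorm := hnorm1 z hz1
    have hxz : x ⬝ᵥ (A *ᵥ x) - 2 * (b ⬝ᵥ x) ≤ z ⬝ᵥ (A *ᵥ z) - 2 * (b ⬝ᵥ z) :=
      hx2 _ hznorm.le
    have hxx : dotProduct (x : Fin n → ℝ) x = 1 := by
      nlinarith [hle x hx1]
    have hxnorm : ‖x‖ = 1 := by
      have := hnormsq x; rw [hxx] at this
      nlinarith [norm_nonneg x]
    refine ⟨⟨hx1, ?_⟩, hxnorm⟩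
    intro y hy
    obtain ⟨w, hw1, hw2⟩ := key_step A b v lam1 hA hv hAv y (hle y hy)
    have hwnorm := hnorm1 w hw1
    have hxw : x ⬝ᵥ (A *ᵥ x) - 2 * (b ⬝ᵥ x) ≤ w ⬝ᵥ (A *ᵥ w) - 2 * (b ⬝ᵥ w) :=
      hx2 _ hwnorm.le
    rw [hxx]
    linarith
  · rintro ⟨⟨hx1, hx2⟩, hx3⟩
    have hxx : dotProduct (x : Fin n → ℝ) x = 1 := by
      rw [hnormsq, hx3]; norm_num
    refine ⟨hx1, ?_⟩
    intro y hy
    have h1 := hx2 y hy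
    rw [hxx] at h1
    have hyy : dotProduct (y : Fin n → ℝ) y ≤ 1 := hle y hy
    nlinarith
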